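/- Let f : ℝ^n → ℝ be differentiable and L > 0. Then the following two conditions are equivalent: (a) f(y) ≥ f(x) + ⟨∇f(x), y − x⟩ + (1/(2L))‖∇f(y) − ∇f(x)‖² for all x, y ∈ ℝ^n; (b) f(αx + (1−α)y) ≤ αf(x) + (1−α)f(y) − (α(1−α)/(2L))‖∇f(x) − ∇f(y)‖² for all x, y ∈ ℝ^n and all α ∈ [0,1]. -/

import Mathlib

open RealInnerProductSpace

lemma aux_deriv (n : ℕ) (f : EuclideanSpace ℝ (Fin n) → ℝ) (hf : Differentiable ℝ f)
    (x y : EuclideanSpace ℝ (Fin n)) :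
    HasDerivAt (fun t : ℝ => f (x + t • (y - x))) ⟪gradient f x, y - x⟫ 0 := by
  have hc : HasDerivAt (fun t : ℝ => x + t • (y - x)) (y - x) 0 := by
    simpa using ((hasDerivAt_id (0:ℝ)).smul_const (y - x)).const_add x
  have hfd := (hf x).hasGradientAt.hasFDerivAt
  rw [show x = x + (0:ℝ) • (y - x) by simp] at hfd
  have := hfd.comp_hasDerivAt (0 : ℝ) hc
  convert this using 1
  · rfl
  · rfl
  · rfl
  · simp

lemma aux_convex (α : ℝ) (hα0 : 0 ≤ α) (hα1 : α ≤ 1)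
    {E : Type*} [NormedAddCommGroup E] [InnerProductSpace ℝ E] (a b : E) :
    α * (1 - α) * ‖a - b‖ ^ 2 ≤ α * ‖a‖ ^ 2 + (1 - α) * ‖b‖ ^ 2 := by
  have h1 : ‖a - b‖ ^ 2 = ‖a‖ ^ 2 - 2 * ⟪a, b⟫ + ‖b‖ ^ 2 := by
    rw [norm_sub_sq_real]
  have h2 : (0 : ℝ) ≤ ‖α • a + (1 - α) • b‖ ^ 2 := sq_nonneg _
  have h3 : ‖α • a + (1 - α) • b‖ ^ 2
      = α ^ 2 * ‖a‖ ^ 2 + 2 * (α * (1 - α)) * ⟪a, b⟫ + (1 - α) ^ 2 * ‖b‖ ^ 2 := by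
    rw [norm_add_sq_real, norm_smul, norm_smul, real_inner_smul_left, real_inner_smul_right,
      Real.norm_eq_abs, Real.norm_eq_abs, abs_of_nonneg hα0, abs_of_nonneg (by linarith : (0:ℝ) ≤ 1 - α)]
    ring
  nlinarith [h2, h3]

/-- For differentiable `f` and `L > 0`, the lower quadratic bound with gradient
difference is equivalent to the corresponding Jensen-type inequality. -/
theorem lowerBound_iff_jensenGrad (n : ℕ) (L : ℝ) (hL : 0 < L)
    (f : EuclideanSpace ℝ (Fin n) → ℝ) (hf : Differentiable ℝ f) :
    (∀ x y : EuclideanSpace ℝ (Fin n),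
        f y ≥ f x + ⟪gradient f x, y - x⟫ + 1 / (2 * L) * ‖gradient f y - gradient f x‖ ^ 2) ↔
      (∀ x y : EuclideanSpace ℝ (Fin n), ∀ α ∈ Set.Icc (0 : ℝ) 1,
        f (α • x + (1 - α) • y) ≤ α * f x + (1 - α) * f y -
          α * (1 - α) / (2 * L) * ‖gradient f x - gradient f y‖ ^ 2) := by
  constructor
  · intro h x y α hα
    obtain ⟨hα0, hα1⟩ := hα
    set z := α • x + (1 - α) • y with hz
    have h1 := h z x
    have h2 := h z y
    have hsum : α * ⟪gradient f z, x - z⟫ + (1 - α) * ⟪gradient f z, y - z⟫ = 0 := by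
      rw [← real_inner_smul_right, ← real_inner_smul_right, ← inner_add_right]
      have : α • (x - z) + (1 - α) • (y - z) = 0 := by
        rw [hz]; module
      rw [this, inner_zero_right]
    have hcvx := aux_convex α hα0 hα1 (gradient f x - gradient f z) (gradient f y - gradient f z)
    have heq : gradient f x - gradient f z - (gradient f y - gradient f z)
        = gradient f x - gradient f y := by abel
    rw [heq] at hcvx
    have hc : (0:ℝ) < 2 * L := by linarith
    have hc' : (0:ℝ) ≤ 1 / (2 * L) := by positivity
    have hrw : α * (1 - α) / (2 * L) * ‖gradient f x - gradient f y‖ ^ 2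
        = 1 / (2 * L) * (α * (1 - α) * ‖gradient f x - gradient f y‖ ^ 2) := by ring
    rw [hrw]
    nlinarith [mul_le_mul_of_nonneg_left h1 hα0,
      mul_le_mul_of_nonneg_left h2 (by linarith : (0:ℝ) ≤ 1 - α),
      mul_le_mul_of_nonneg_left hcvx hc']
  · intro h x y
    have hd := aux_deriv n f hf x y
    set C := ‖gradient f y - gradient f x‖ ^ 2 with hC
    -- slope inequality on (0,1]
    have key : ∀ t ∈ Set.Ioo (0:ℝ) 1,
        slope (fun t : ℝ => f (x + t • (y - x))) 0 t
          ≤ f y - f x - (1 - t) / (2 * L) * C := by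
      intro t ht
      obtain ⟨ht0, ht1⟩ := ht
      have hb := h y x t ⟨le_of_lt ht0, le_of_lt ht1⟩
      have hxt : t • y + (1 - t) • x = x + t • (y - x) := by module
      rw [hxt] at hb
      rw [slope_def_field]
      simp only [zero_smul, add_zero, sub_zero]
      rw [div_le_iff₀ ht0, hC]
      linear_combination hb
    have hslope : Filter.Tendsto (slope (fun t : ℝ => f (x + t • (y - x))) 0)
        (nhdsWithin 0 (Set.Ioi 0)) (nhds ⟪gradient f x, y - x⟫) := by
      have := hasDerivAt_iff_tendsto_slope.mp hd
      exact this.mono_left (nhdsWithin_mono 0 (fun a ha => ne_of_gt ha))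
    have hrhs : Filter.Tendsto (fun t : ℝ => f y - f x - (1 - t) / (2 * L) * C)
        (nhdsWithin 0 (Set.Ioi 0)) (nhds (f y - f x - (1 - 0) / (2 * L) * C)) := by
      apply Filter.Tendsto.mono_left _ nhdsWithin_le_nhds
      exact (Continuous.tendsto (by continuity) 0)
    have hle : ⟪gradient f x, y - x⟫ ≤ f y - f x - (1 - 0) / (2 * L) * C := by
      refine le_of_tendsto_of_tendsto hslope hrhs ?_
      filter_upwards [Ioo_mem_nhdsGT_of_mem (Set.mem_Ico.mpr ⟨le_refl 0, zero_lt_one⟩)] with t ht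
        using key t ht
    rw [ge_iff_le]
    simp only [sub_zero] at hle
    linarith
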